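/- For any nonempty Young diagram Y, Depth(K(Y)) = Depth(Y) − 1, where Depth(Y) = max{ i + j − 1 : (i,j) ∈ Y } and Depth(∅) = 0, and K is the corner-cutting map removing all exposed corners. -/
import Mathlib


open Finset

/-- The k-th bit of a string of length `n`, padded with `false` out of range. -/
def bit (n : ℕ) (ω : Fin n → Bool) (k : ℕ) : Bool :=
  if h : k < n then ω ⟨k, h⟩ else false

/-- One step of the evolution: every occurrence of "01" is replaced by "10"
(simultaneously).  `E(ω)_i = 1` iff `(ω_i = 1 ∧ ¬(i ≥ 2 ∧ ω_{i-1} = 0)) ∨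
(ω_i = 0 ∧ i < n ∧ ω_{i+1} = 1)` (1-indexed; here 0-indexed). -/
def evolve (n : ℕ) (ω : Fin n → Bool) : Fin n → Bool :=
  fun i =>
    (bit n ω i.val && !(decide (0 < i.val) && !bit n ω (i.val - 1)))
      || (!bit n ω i.val && bit n ω (i.val + 1))

/-- A string is stable iff it contains no occurrence of "01". -/
def IsStable (n : ℕ) (ω : Fin n → Bool) : Prop :=
  ∀ k : ℕ, ¬(bit n ω k = false ∧ bit n ω (k + 1) = true)

/-- The stabilization time: the least number of applications of `evolve`
after which the string is stable. -/
noncomputable def stabTime (n : ℕ) (ω : Fin n → Bool) : ℕ :=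
  sInf {m : ℕ | IsStable n ((evolve n)^[m] ω)}

/-- A Young diagram: a finite down-closed set of cells in ℕ≥1 × ℕ≥1. -/
def IsYoungDiagram (Y : Finset (ℕ × ℕ)) : Prop :=
  (∀ c ∈ Y, 1 ≤ c.1 ∧ 1 ≤ c.2) ∧
    ∀ c ∈ Y, ∀ i j : ℕ, 1 ≤ i → 1 ≤ j → i ≤ c.1 → j ≤ c.2 → (i, j) ∈ Y

/-- The corner-cutting map: remove all exposed corners, i.e. cells `(i,j)` with
`(i+1,j) ∉ Y` and `(i,j+1) ∉ Y`. -/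
def cutCorners (Y : Finset (ℕ × ℕ)) : Finset (ℕ × ℕ) :=
  Y.filter fun c => (c.1 + 1, c.2) ∈ Y ∨ (c.1, c.2 + 1) ∈ Y

/-- Depth of a Young diagram: `max {i + j - 1 : (i,j) ∈ Y}`, with `depth ∅ = 0`. -/
def depth (Y : Finset (ℕ × ℕ)) : ℕ := Y.sup fun c => c.1 + c.2 - 1

/-- Number of zeros among the first `m` bits of `ω`. -/
def zerosBefore (n : ℕ) (ω : Fin n → Bool) (m : ℕ) : ℕ :=
  (Finset.univ.filter fun l : Fin n => l.val < m ∧ ω l = false).card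

/-- Number of ones among the bits of `ω` from position `m` (0-indexed) on. -/
def onesFrom (n : ℕ) (ω : Fin n → Bool) (m : ℕ) : ℕ :=
  (Finset.univ.filter fun l : Fin n => m ≤ l.val ∧ ω l = true).card

open Classical in
/-- The Young diagram associated to a binary string: the cells below the
monotone lattice path reading ω left to right (0 = right step, 1 = down step).
`(i,j) ∈ Y(ω)` iff there is a cut point `m` with at least `i` zeros among the
first `m` bits and at least `j` ones among the remaining bits. -/
noncomputable def diag (n : ℕ) (ω : Fin n → Bool) : Finset (ℕ × ℕ) :=
  (Finset.Icc 1 n ×ˢ Finset.Icc 1 n).filter fun c =>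
    1 ≤ c.1 ∧ 1 ≤ c.2 ∧ ∃ m ≤ n, c.1 ≤ zerosBefore n ω m ∧ c.2 ≤ onesFrom n ω m

/-- For a nonempty Young diagram, cutting corners decreases the depth by 1. -/
theorem stmt4 (Y : Finset (ℕ × ℕ)) (hY : IsYoungDiagram Y) (hne : Y.Nonempty) :
    depth (cutCorners Y) = depth Y - 1 := by
  obtain ⟨hpos, hdown⟩ := hY
  simp only [depth]
  apply le_antisymm
  · apply Finset.sup_le
    intro c hc
    rw [cutCorners, Finset.mem_filter] at hc
    obtain ⟨hcY, hnb⟩ := hc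
    rcases hnb with h | h
    · have := Finset.le_sup (f := fun c : ℕ × ℕ => c.1 + c.2 - 1) h
      simp only at this
      omega
    · have := Finset.le_sup (f := fun c : ℕ × ℕ => c.1 + c.2 - 1) h
      simp only at this
      omega
  · obtain ⟨c, hcY, hceq⟩ := Finset.exists_mem_eq_sup Y hne
      (fun c : ℕ × ℕ => c.1 + c.2 - 1)
    obtain ⟨h1, h2⟩ := hpos c hcY
    by_cases hD : Y.sup (fun c : ℕ × ℕ => c.1 + c.2 - 1) ≤ 1
    · omega
    · push_neg at hD
      by_cases hc1 : 2 ≤ c.1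
      · have hin : (c.1 - 1, c.2) ∈ Y :=
          hdown c hcY (c.1 - 1) c.2 (by omega) h2 (by omega) le_rfl
        have hnb : (c.1 - 1 + 1, c.2) ∈ Y := by
          have : (c.1 - 1 + 1, c.2) = c := by
            rw [Prod.ext_iff]; constructor <;> simp <;> omega
          rw [this]; exact hcY
        have hmem : (c.1 - 1, c.2) ∈ cutCorners Y := by
          rw [cutCorners, Finset.mem_filter]
          exact ⟨hin, Or.inl hnb⟩
        have := Finset.le_sup (f := fun c : ℕ × ℕ => c.1 + c.2 - 1) hmem
        simp at this
        omega
      · have hc2 : 2 ≤ c.2 := by omega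
        have hin : (c.1, c.2 - 1) ∈ Y :=
          hdown c hcY c.1 (c.2 - 1) h1 (by omega) le_rfl (by omega)
        have hnb : (c.1, c.2 - 1 + 1) ∈ Y := by
          have : (c.1, c.2 - 1 + 1) = c := by
            rw [Prod.ext_iff]; constructor <;> simp <;> omega
          rw [this]; exact hcY
        have hmem : (c.1, c.2 - 1) ∈ cutCorners Y := by
          rw [cutCorners, Finset.mem_filter]
          exact ⟨hin, Or.inr hnb⟩
        have := Finset.le_sup (f := fun c : ℕ × ℕ => c.1 + c.2 - 1) hmem
        simp at this
        omega
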